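/- For independent uniform bits X¹,...,Xⁿ and any auxiliary random variable V, the objective H(X¹...X^{m₁}|V) + μ·Σ_{i} p(i)·I(V; X¹...Xⁱ) can be written as Σ_{j=1}^{m₁} [ (1−μ·q(j))·H(Xʲ|V,X¹,...,X^{j−1}) + μ·q(j)·H(Xʲ|X¹,...,X^{j−1}) ] + μ·Σ_{j=m₁+1}^{n} (Σ_{i≥j} p(i))·I(V;Xʲ|X¹,...,X^{j−1}), where q(j) = Σ_{i=j}^{n} p(i) restricted appropriately; consequently it is maximized over choices of V by taking V to determine exactly those bit levels j with μ·q(j) ≥ 1 together with levels j > m₁, yielding maximum value Σ_{j=1}^{m₁} max(1, μ·q(j)) + μ·Σ_{j=m₁+1}^{n} Σ_{i=j}^{n} p(i). -/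

import Mathlib

open Finset

noncomputable def probOf {Ω α : Type} [Fintype Ω] [DecidableEq α]
    (p : Ω → ℝ) (Z : Ω → α) (a : α) : ℝ :=
  ∑ ω ∈ Finset.univ.filter (fun ω => Z ω = a), p ω

noncomputable def entH {Ω α : Type} [Fintype Ω] [DecidableEq α]
    (p : Ω → ℝ) (Z : Ω → α) : ℝ :=
  -∑ a ∈ Finset.univ.image Z, probOf p Z a * Real.logb 2 (probOf p Z a)

noncomputable def condH {Ω α β : Type} [Fintype Ω] [DecidableEq α] [DecidableEq β]
    (p : Ω → ℝ) (Y : Ω → α) (M : Ω → β) : ℝ :=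
  entH p (fun ω => (Y ω, M ω)) - entH p M

noncomputable def mutI {Ω α β : Type} [Fintype Ω] [DecidableEq α] [DecidableEq β]
    (p : Ω → ℝ) (X : Ω → α) (Y : Ω → β) : ℝ :=
  entH p X + entH p Y - entH p (fun ω => (X ω, Y ω))

noncomputable def condMI {Ω α β γ : Type} [Fintype Ω] [DecidableEq α] [DecidableEq β] [DecidableEq γ]
    (p : Ω → ℝ) (X : Ω → α) (Y : Ω → β) (Z : Ω → γ) : ℝ :=
  entH p (fun ω => (X ω, Z ω)) + entH p (fun ω => (Y ω, Z ω))
    - entH p (fun ω => (X ω, Y ω, Z ω)) - entH p Z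

noncomputable def expec {Ω : Type} [Fintype Ω] (p : Ω → ℝ) (f : Ω → ℝ) : ℝ :=
  ∑ ω, p ω * f ω

def IndepRV {Ω α β : Type} [Fintype Ω] [DecidableEq α] [DecidableEq β]
    (p : Ω → ℝ) (X : Ω → α) (Y : Ω → β) : Prop :=
  ∀ a b, probOf p (fun ω => (X ω, Y ω)) (a, b) = probOf p X a * probOf p Y b

def trunc (n : ℕ) (x : Fin n → Bool) (m : ℕ) : Fin n → Bool :=
  fun i => if i.val < m then x i else false

def bitOf (n : ℕ) (x : Fin n → Bool) (j : ℕ) : Bool :=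
  if h : j - 1 < n then x ⟨j - 1, h⟩ else false

/-- The weighted-sum objective for the semi-deterministic fading broadcast channel. -/
noncomputable def bcObjective {Ω γ : Type} [Fintype Ω] [DecidableEq γ]
    (p : Ω → ℝ) (n m₁ : ℕ) (μ : ℝ) (pM : ℕ → ℝ)
    (X : Ω → Fin n → Bool) (V : Ω → γ) : ℝ :=
  condH p (fun ω => trunc n (X ω) m₁) V +
    μ * ∑ i ∈ Finset.range (n + 1), pM i * mutI p V (fun ω => trunc n (X ω) i)

section Lemmas

variable {Ω α β : Type} [Fintype Ω] [DecidableEq α] [DecidableEq β]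

lemma probOf_nonneg (p : Ω → ℝ) (hp : ∀ ω, 0 ≤ p ω) (Z : Ω → α) (a : α) :
    0 ≤ probOf p Z a :=
  Finset.sum_nonneg fun ω _ => hp ω

lemma probOf_comp (p : Ω → ℝ) (Z : Ω → α) (g : α → β) (v : β) :
    probOf p (fun ω => g (Z ω)) v
      = ∑ a ∈ (Finset.univ.image Z).filter (fun a => g a = v), probOf p Z a := by
  unfold probOf
  rw [← Finset.sum_fiberwise_of_maps_to (g := Z)
      (t := (Finset.univ.image Z).filter (fun a => g a = v))]
  · apply Finset.sum_congr rfl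
    intro a ha
    simp only [Finset.mem_filter, Finset.mem_image, Finset.mem_univ, true_and] at ha
    apply Finset.sum_congr _ (fun _ _ => rfl)
    ext ω
    simp only [Finset.mem_filter, Finset.mem_univ, true_and]
    exact ⟨fun h => h.2, fun h => ⟨by rw [h]; exact ha.2, h⟩⟩
  · intro ω hω
    simp only [Finset.mem_filter, Finset.mem_univ, Finset.mem_image, true_and] at hω ⊢
    exact ⟨⟨ω, rfl⟩, hω⟩

lemma sum_probOf (p : Ω → ℝ) (Z : Ω → α) :
    ∑ a ∈ Finset.univ.image Z, probOf p Z a = ∑ ω, p ω := by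
  unfold probOf
  apply Finset.sum_fiberwise_of_maps_to
  intro ω _; exact Finset.mem_image_of_mem _ (Finset.mem_univ ω)

lemma entH_congr (p : Ω → ℝ) (Z₁ : Ω → α) (Z₂ : Ω → β) (g : β → α) (h : α → β)
    (hZ : ∀ ω, Z₁ ω = g (Z₂ ω)) (hgh : ∀ ω, h (Z₁ ω) = Z₂ ω) :
    entH p Z₁ = entH p Z₂ := by
  have hinj : ∀ a ∈ Finset.univ.image Z₂, ∀ b ∈ Finset.univ.image Z₂, g a = g b → a = b := by
    intro a ha b hb hab
    simp only [Finset.mem_image, Finset.mem_univ, true_and] at ha hb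
    obtain ⟨ω₁, rfl⟩ := ha; obtain ⟨ω₂, rfl⟩ := hb
    have h1 : h (g (Z₂ ω₁)) = Z₂ ω₁ := by rw [← hZ]; exact hgh ω₁
    have h2 : h (g (Z₂ ω₂)) = Z₂ ω₂ := by rw [← hZ]; exact hgh ω₂
    rw [← h1, ← h2, hab]
  have himg : Finset.univ.image Z₁ = (Finset.univ.image Z₂).image g := by
    have : Z₁ = fun ω => g (Z₂ ω) := funext hZ
    rw [this, show (fun ω => g (Z₂ ω)) = g ∘ Z₂ from rfl, ← Finset.image_image]
  have hprob : ∀ a ∈ Finset.univ.image Z₂, probOf p Z₁ (g a) = probOf p Z₂ a := by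
    intro a ha
    simp only [Finset.mem_image, Finset.mem_univ, true_and] at ha
    obtain ⟨ω₀, rfl⟩ := ha
    unfold probOf
    apply Finset.sum_congr _ (fun _ _ => rfl)
    ext ω
    simp only [Finset.mem_filter, Finset.mem_univ, true_and]
    constructor
    · intro hh
      have := hgh ω
      rw [hh] at this
      rw [← this, ← hZ ω₀, hgh ω₀]
    · intro hh; rw [hZ ω, hh]
  unfold entH
  rw [himg, Finset.sum_image hinj]
  refine congrArg _ (Finset.sum_congr rfl fun a ha => by rw [hprob a ha])

end Lemmas
section Lemmas2

variable {α : Type} [DecidableEq α]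

lemma group_lower (s : Finset α) (f : α → ℝ) (hf : ∀ a ∈ s, 0 ≤ f a) :
    -((∑ a ∈ s, f a) * Real.logb 2 (∑ a ∈ s, f a))
      ≤ -∑ a ∈ s, f a * Real.logb 2 (f a) := by
  set S := ∑ a ∈ s, f a with hS
  have hS0 : 0 ≤ S := Finset.sum_nonneg hf
  rw [neg_le_neg_iff]
  calc ∑ a ∈ s, f a * Real.logb 2 (f a)
      ≤ ∑ a ∈ s, f a * Real.logb 2 S := by
        apply Finset.sum_le_sum
        intro a ha
        rcases eq_or_lt_of_le (hf a ha) with h0 | h0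
        · simp [← h0]
        · apply mul_le_mul_of_nonneg_left _ (hf a ha)
          exact Real.logb_le_logb_of_le (by norm_num) h0 (Finset.single_le_sum hf ha)
    _ = S * Real.logb 2 S := by rw [← Finset.sum_mul]

lemma group_upper (s : Finset α) (f : α → ℝ) (hf : ∀ a ∈ s, 0 ≤ f a)
    (K : ℕ) (hK : 1 ≤ K) (hcard : s.card ≤ K) :
    -∑ a ∈ s, f a * Real.logb 2 (f a)
      ≤ -((∑ a ∈ s, f a) * Real.logb 2 (∑ a ∈ s, f a)) + (∑ a ∈ s, f a) * Real.logb 2 K := by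
  set S := ∑ a ∈ s, f a with hS
  have hS0 : 0 ≤ S := Finset.sum_nonneg hf
  have hlog2 : (0:ℝ) < Real.log 2 := Real.log_pos (by norm_num)
  have hKR : (0:ℝ) < (K:ℝ) := by exact_mod_cast hK
  rcases eq_or_lt_of_le hS0 with hS0' | hSpos
  · have hall : ∀ a ∈ s, f a = 0 := by
      intro a ha
      exact (Finset.sum_eq_zero_iff_of_nonneg hf).mp hS0'.symm a ha
    have : ∑ a ∈ s, f a * Real.logb 2 (f a) = 0 :=
      Finset.sum_eq_zero fun a ha => by rw [hall a ha]; ring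
    rw [this, ← hS0']
    simp
  · -- main case
    have key : ∀ a ∈ s,
        f a * Real.logb 2 S - f a * Real.logb 2 (f a) - f a * Real.logb 2 K
          ≤ (S / K - f a) / Real.log 2 := by
      intro a ha
      rcases eq_or_lt_of_le (hf a ha) with h0 | h0
      · rw [← h0]
        simp only [zero_mul, sub_zero, sub_self, zero_sub, neg_zero, sub_zero]
        positivity
      · have harg : 0 < S / ((K:ℝ) * f a) := by positivity
        have hlogb : Real.logb 2 S - Real.logb 2 (f a) - Real.logb 2 K
            = Real.log (S / ((K:ℝ) * f a)) / Real.log 2 := by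
          rw [Real.log_div (ne_of_gt hSpos) (by positivity),
            Real.log_mul (ne_of_gt hKR) (ne_of_gt h0)]
          simp only [Real.logb]
          ring
        have hle : Real.log (S / ((K:ℝ) * f a)) ≤ S / ((K:ℝ) * f a) - 1 :=
          Real.log_le_sub_one_of_pos harg
        calc f a * Real.logb 2 S - f a * Real.logb 2 (f a) - f a * Real.logb 2 K
            = f a * (Real.log (S / ((K:ℝ) * f a)) / Real.log 2) := by rw [← hlogb]; ring
          _ ≤ f a * ((S / ((K:ℝ) * f a) - 1) / Real.log 2) := by
              apply mul_le_mul_of_nonneg_left _ (le_of_lt h0)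
              gcongr
          _ = (S / K - f a) / Real.log 2 := by
              field_simp
    have sum_key : ∑ a ∈ s, (f a * Real.logb 2 S - f a * Real.logb 2 (f a) - f a * Real.logb 2 K)
        ≤ ∑ a ∈ s, (S / K - f a) / Real.log 2 := Finset.sum_le_sum key
    have lhs_eq : ∑ a ∈ s, (f a * Real.logb 2 S - f a * Real.logb 2 (f a) - f a * Real.logb 2 K)
        = S * Real.logb 2 S - (∑ a ∈ s, f a * Real.logb 2 (f a)) - S * Real.logb 2 K := by
      rw [Finset.sum_sub_distrib, Finset.sum_sub_distrib, ← Finset.sum_mul, ← Finset.sum_mul]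
    have rhs_le : ∑ a ∈ s, (S / K - f a) / Real.log 2 ≤ 0 := by
      rw [← Finset.sum_div]
      have h1 : ∑ a ∈ s, (S / (K:ℝ) - f a) = s.card * (S / K) - S := by
        rw [Finset.sum_sub_distrib, Finset.sum_const, nsmul_eq_mul, ← hS]
      rw [h1]
      apply div_nonpos_of_nonpos_of_nonneg _ (le_of_lt hlog2)
      have h2 : (s.card : ℝ) * (S / K) ≤ (K:ℝ) * (S / K) := by
        apply mul_le_mul_of_nonneg_right _ (by positivity)
        exact_mod_cast hcard
      have hKS : (K:ℝ) * (S / K) = S := by field_simp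
      linarith
    linarith [lhs_eq ▸ sum_key]

end Lemmas2
section Lemmas3

variable {Ω α β : Type} [Fintype Ω] [DecidableEq α] [DecidableEq β]

lemma fiber_maps (Z : Ω → α) (g : α → β) :
    ∀ a ∈ Finset.univ.image Z, g a ∈ Finset.univ.image (fun ω => g (Z ω)) := by
  intro a ha
  simp only [Finset.mem_image, Finset.mem_univ, true_and] at ha ⊢
  obtain ⟨ω, rfl⟩ := ha
  exact ⟨ω, rfl⟩

lemma entH_regroup (p : Ω → ℝ) (Z : Ω → α) (g : α → β) :
    entH p Z = -∑ m ∈ Finset.univ.image (fun ω => g (Z ω)),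
      ∑ a ∈ (Finset.univ.image Z).filter (fun a => g a = m),
        probOf p Z a * Real.logb 2 (probOf p Z a) := by
  unfold entH
  rw [Finset.sum_fiberwise_of_maps_to (fiber_maps Z g)]

lemma entH_comp_le (p : Ω → ℝ) (hp : ∀ ω, 0 ≤ p ω) (Z : Ω → α) (g : α → β) :
    entH p (fun ω => g (Z ω)) ≤ entH p Z := by
  rw [entH_regroup p Z g]
  unfold entH
  rw [neg_le_neg_iff]
  apply Finset.sum_le_sum
  intro m hm
  have := group_lower ((Finset.univ.image Z).filter (fun a => g a = m)) (probOf p Z)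
    (fun a _ => probOf_nonneg p hp Z a)
  rw [← probOf_comp p Z g m] at this
  linarith
lemma entH_le_comp_add (p : Ω → ℝ) (hp : ∀ ω, 0 ≤ p ω) (hp1 : ∑ ω, p ω = 1)
    (Z : Ω → α) (g : α → β) (K : ℕ) (hK : 1 ≤ K)
    (hfib : ∀ m, (((Finset.univ.image Z)).filter (fun a => g a = m)).card ≤ K) :
    entH p Z ≤ entH p (fun ω => g (Z ω)) + Real.logb 2 K := by
  rw [entH_regroup p Z g]
  unfold entH
  set J := Finset.univ.image (fun ω => g (Z ω)) with hJ
  set P := probOf p (fun ω => g (Z ω)) with hP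
  have key : ∀ m ∈ J, P m * Real.logb 2 (P m) - P m * Real.logb 2 K
      ≤ ∑ a ∈ (Finset.univ.image Z).filter (fun a => g a = m),
          probOf p Z a * Real.logb 2 (probOf p Z a) := by
    intro m _
    have := group_upper ((Finset.univ.image Z).filter (fun a => g a = m)) (probOf p Z)
      (fun a _ => probOf_nonneg p hp Z a) K hK (hfib m)
    rw [← probOf_comp p Z g m] at this
    rw [hP]
    linarith
  have hsum := Finset.sum_le_sum key
  rw [Finset.sum_sub_distrib, ← Finset.sum_mul] at hsum
  have hone : ∑ m ∈ J, P m = 1 := by rw [hP, hJ, sum_probOf, hp1]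
  rw [hone, one_mul] at hsum
  linarith

end Lemmas3
def mask (n : ℕ) (S : Finset (Fin n)) (x : Fin n → Bool) : Fin n → Bool :=
  fun i => if i ∈ S then x i else false

section Lemmas4

variable {Ω : Type} [Fintype Ω] {n : ℕ}

lemma trunc_eq_mask (x : Fin n → Bool) (m : ℕ) :
    trunc n x m = mask n (Finset.univ.filter (fun i => i.val < m)) x := by
  funext i; simp [trunc, mask]

lemma X_surj (p : Ω → ℝ) (X : Ω → Fin n → Bool)
    (hXunif : ∀ x, probOf p X x = (1 / 2 : ℝ) ^ n) (x : Fin n → Bool) :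
    ∃ ω, X ω = x := by
  by_contra hc
  push_neg at hc
  have h0 : probOf p X x = 0 := by
    unfold probOf
    rw [Finset.filter_false_of_mem (fun ω _ => hc ω), Finset.sum_empty]
  rw [hXunif x] at h0
  have : ((1:ℝ)/2)^n ≠ 0 := by positivity
  exact this h0

lemma image_mask (p : Ω → ℝ) (X : Ω → Fin n → Bool)
    (hXunif : ∀ x, probOf p X x = (1 / 2 : ℝ) ^ n) (S : Finset (Fin n)) :
    Finset.univ.image (fun ω => mask n S (X ω))
      = Fintype.piFinset (fun i => if i ∈ S then (Finset.univ : Finset Bool) else {false}) := by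
  ext v
  simp only [Finset.mem_image, Finset.mem_univ, true_and, Fintype.mem_piFinset]
  constructor
  · rintro ⟨ω, rfl⟩ i
    by_cases hi : i ∈ S <;> simp [mask, hi]
  · intro hv
    obtain ⟨ω, hω⟩ := X_surj p X hXunif v
    refine ⟨ω, ?_⟩
    funext i
    rw [hω]
    by_cases hi : i ∈ S
    · simp [mask, hi]
    · have := hv i
      simp [hi] at this
      simp [mask, hi, this]

lemma card_pi_ite (S : Finset (Fin n)) (a b : Fin n → Finset Bool) (ka kb : ℕ)
    (ha : ∀ i, (a i).card = ka) (hb : ∀ i, (b i).card = kb) :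
    (Fintype.piFinset (fun i => if i ∈ S then a i else b i)).card
      = ka ^ S.card * kb ^ (n - S.card) := by
  rw [Fintype.card_piFinset]
  simp only [apply_ite Finset.card, ha, hb]
  rw [Finset.prod_ite, Finset.prod_const, Finset.prod_const]
  congr 2
  · simp
  · rw [Finset.filter_not, Finset.card_sdiff_of_subset (Finset.filter_subset _ _)]
    simp

lemma fiber_mask (S : Finset (Fin n)) (x₀ : Fin n → Bool) :
    Finset.univ.filter (fun x : Fin n → Bool => mask n S x = mask n S x₀)
      = Fintype.piFinset (fun i => if i ∈ S then ({x₀ i} : Finset Bool) else Finset.univ) := by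
  ext x
  simp only [Finset.mem_filter, Finset.mem_univ, true_and, Fintype.mem_piFinset]
  constructor
  · intro h i
    have := congrFun h i
    by_cases hi : i ∈ S <;> simp [mask, hi] at this ⊢ <;> try exact this
  · intro h
    funext i
    have := h i
    by_cases hi : i ∈ S <;> simp [mask, hi] at this ⊢ <;> try exact this

lemma probOf_mask (p : Ω → ℝ) (X : Ω → Fin n → Bool)
    (hXunif : ∀ x, probOf p X x = (1 / 2 : ℝ) ^ n) (S : Finset (Fin n)) (x₀ : Fin n → Bool) :
    probOf p (fun ω => mask n S (X ω)) (mask n S x₀) = (1 / 2 : ℝ) ^ S.card := by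
  rw [probOf_comp p X (mask n S) (mask n S x₀)]
  have himgX : Finset.univ.image X = Finset.univ := by
    ext x
    simp only [Finset.mem_image, Finset.mem_univ, true_and, iff_true]
    exact X_surj p X hXunif x
  rw [himgX, fiber_mask S x₀]
  rw [Finset.sum_congr rfl (fun x _ => hXunif x), Finset.sum_const,
    card_pi_ite S _ _ 1 2 (fun i => Finset.card_singleton (x₀ i)) (fun _ => by simp)]
  simp only [one_pow, one_mul, nsmul_eq_mul]
  have hSn : S.card ≤ n := by
    simpa using Finset.card_le_card (Finset.subset_univ S)
  have hn : n = (n - S.card) + S.card := by omega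
  have key : ((2:ℝ))^(n - S.card) * ((1:ℝ)/2)^n = (1/2)^S.card := by
    calc ((2:ℝ))^(n - S.card) * ((1:ℝ)/2)^n
        = 2^(n-S.card)*((1/2)^(n-S.card)*(1/2)^(S.card)) := by rw [← pow_add, ← hn]
      _ = ((2:ℝ)*(1/2))^(n-S.card)*(1/2)^(S.card) := by rw [← mul_assoc, ← mul_pow]
      _ = (1/2)^S.card := by norm_num
  push_cast
  rw [key]

lemma entH_mask (p : Ω → ℝ) (X : Ω → Fin n → Bool)
    (hXunif : ∀ x, probOf p X x = (1 / 2 : ℝ) ^ n) (S : Finset (Fin n)) :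
    entH p (fun ω => mask n S (X ω)) = S.card := by
  unfold entH
  have hterm : ∀ v ∈ Finset.univ.image (fun ω => mask n S (X ω)),
      probOf p (fun ω => mask n S (X ω)) v * Real.logb 2 (probOf p (fun ω => mask n S (X ω)) v)
        = ((1:ℝ)/2)^S.card * (S.card * (-1)) := by
    intro v hv
    simp only [Finset.mem_image, Finset.mem_univ, true_and] at hv
    obtain ⟨ω, rfl⟩ := hv
    rw [probOf_mask p X hXunif S (X ω)]
    congr 1
    rw [Real.logb_pow]
    congr 1
    rw [one_div, Real.logb_inv, Real.logb_self_eq_one (by norm_num)]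
  rw [Finset.sum_congr rfl hterm, Finset.sum_const, image_mask p X hXunif S,
    card_pi_ite S _ _ 2 1 (fun _ => by simp) (fun i => Finset.card_singleton false)]
  simp only [one_pow, mul_one, nsmul_eq_mul]
  have h2 : ((2:ℝ))^S.card * ((1:ℝ)/2)^S.card = 1 := by
    rw [← mul_pow]; norm_num
  push_cast
  nlinarith [h2]

end Lemmas4
section Lemmas5

variable {Ω γ : Type} [Fintype Ω] [DecidableEq γ] {n : ℕ}

lemma trunc_zero (x : Fin n → Bool) : trunc n x 0 = fun _ => false := by
  funext i; simp [trunc]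

lemma trunc_trunc (x : Fin n → Bool) {m j : ℕ} (h : m ≤ j) :
    trunc n (trunc n x j) m = trunc n x m := by
  funext i
  simp only [trunc]
  by_cases hi : (i:ℕ) < m
  · rw [if_pos hi, if_pos hi, if_pos (lt_of_lt_of_le hi h)]
  · rw [if_neg hi, if_neg hi]

lemma bitOf_trunc (x : Fin n → Bool) {j : ℕ} (h1 : 1 ≤ j) (h2 : j ≤ n) :
    bitOf n (trunc n x j) j = bitOf n x j := by
  have hj : j - 1 < n := by omega
  simp only [bitOf, dif_pos hj, trunc]
  rw [if_pos (show ((⟨j-1, hj⟩ : Fin n) : ℕ) < j from by show j - 1 < j; omega)]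

lemma recon_trunc (x : Fin n → Bool) {j : ℕ} (h1 : 1 ≤ j) (h2 : j ≤ n) :
    (fun i : Fin n => if (i:ℕ) = j - 1 then bitOf n x j else trunc n x (j-1) i)
      = trunc n x j := by
  have hj : j - 1 < n := by omega
  funext i
  simp only [bitOf, dif_pos hj, trunc]
  by_cases hi : (i:ℕ) = j - 1
  · rw [if_pos hi, if_pos (by omega : (i:ℕ) < j)]
    congr 1
    exact (Fin.ext hi.symm : (⟨j-1, hj⟩ : Fin n) = i)
  · rw [if_neg hi]
    by_cases hi2 : (i:ℕ) < j - 1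
    · rw [if_pos hi2, if_pos (by omega)]
    · rw [if_neg hi2, if_neg (by omega)]

lemma trunc_reconstruct (x : Fin n → Bool) {j : ℕ} (h1 : 1 ≤ j) (h2 : j ≤ n) :
    trunc n x j = (fun i : Fin n => if (i:ℕ) = j - 1 then trunc n x j ⟨j-1, by omega⟩
      else trunc n (trunc n x j) (j-1) i) := by
  funext i
  by_cases hi : (i:ℕ) = j - 1
  · rw [if_pos hi]
    simp only [trunc]
    rw [if_pos (show ((⟨j-1, by omega⟩ : Fin n) : ℕ) < j from by show j - 1 < j; omega),
      if_pos (show (i:ℕ) < j by omega)]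
    congr 1
    exact Fin.ext hi
  · rw [if_neg hi, trunc_trunc x (show j - 1 ≤ j by omega)]
    simp only [trunc]
    by_cases hi2 : (i:ℕ) < j - 1
    · rw [if_pos hi2, if_pos (show (i:ℕ) < j by omega)]
    · rw [if_neg hi2, if_neg (show ¬((i:ℕ) < j) by omega)]

lemma entH_pair_comm {α β : Type} [DecidableEq α] [DecidableEq β]
    (p : Ω → ℝ) (Y : Ω → α) (M : Ω → β) :
    entH p (fun ω => (Y ω, M ω)) = entH p (fun ω => (M ω, Y ω)) :=
  entH_congr p _ _ Prod.swap Prod.swap (fun _ => rfl) (fun _ => rfl)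

lemma entH_pair_trunc_zero (p : Ω → ℝ) (X : Ω → Fin n → Bool) (V : Ω → γ) :
    entH p (fun ω => (V ω, trunc n (X ω) 0)) = entH p V :=
  entH_congr p _ _ (fun v => (v, fun _ => false)) Prod.fst
    (fun ω => by rw [trunc_zero]) (fun _ => rfl)

lemma entH_bit_pair (p : Ω → ℝ) (X : Ω → Fin n → Bool) (V : Ω → γ) {j : ℕ}
    (h1 : 1 ≤ j) (h2 : j ≤ n) :
    entH p (fun ω => (bitOf n (X ω) j, (V ω, trunc n (X ω) (j-1))))
      = entH p (fun ω => (V ω, trunc n (X ω) j)) := by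
  apply entH_congr p _ _
    (fun a : γ × (Fin n → Bool) => (bitOf n a.2 j, (a.1, trunc n a.2 (j-1))))
    (fun a : Bool × (γ × (Fin n → Bool)) =>
      (a.2.1, fun i : Fin n => if (i:ℕ) = j - 1 then a.1 else a.2.2 i))
  · intro ω
    try simp only
    rw [bitOf_trunc (X ω) h1 h2, trunc_trunc (X ω) (by omega : j - 1 ≤ j)]
  · intro ω
    try simp only
    rw [recon_trunc (X ω) h1 h2]

lemma entH_bit_pair' (p : Ω → ℝ) (X : Ω → Fin n → Bool) {j : ℕ}
    (h1 : 1 ≤ j) (h2 : j ≤ n) :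
    entH p (fun ω => (bitOf n (X ω) j, trunc n (X ω) (j-1)))
      = entH p (fun ω => trunc n (X ω) j) := by
  apply entH_congr p _ _
    (fun t : Fin n → Bool => (bitOf n t j, trunc n t (j-1)))
    (fun a : Bool × (Fin n → Bool) =>
      (fun i : Fin n => if (i:ℕ) = j - 1 then a.1 else a.2 i))
  · intro ω
    try simp only
    rw [bitOf_trunc (X ω) h1 h2, trunc_trunc (X ω) (by omega : j - 1 ≤ j)]
  · intro ω
    try simp only
    rw [recon_trunc (X ω) h1 h2]

lemma entH_triple (p : Ω → ℝ) (X : Ω → Fin n → Bool) (V : Ω → γ) {j : ℕ}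
    (h1 : 1 ≤ j) (h2 : j ≤ n) :
    entH p (fun ω => (V ω, bitOf n (X ω) j, trunc n (X ω) (j-1)))
      = entH p (fun ω => (V ω, trunc n (X ω) j)) := by
  apply entH_congr p _ _
    (fun a : γ × (Fin n → Bool) => (a.1, bitOf n a.2 j, trunc n a.2 (j-1)))
    (fun a : γ × Bool × (Fin n → Bool) =>
      (a.1, fun i : Fin n => if (i:ℕ) = j - 1 then a.2.1 else a.2.2 i))
  · intro ω
    try simp only
    rw [bitOf_trunc (X ω) h1 h2, trunc_trunc (X ω) (by omega : j - 1 ≤ j)]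
  · intro ω
    try simp only
    rw [recon_trunc (X ω) h1 h2]

lemma card_filter_val_lt {j : ℕ} (hj : j ≤ n) :
    (Finset.univ.filter (fun i : Fin n => (i:ℕ) < j)).card = j := by
  have : Finset.univ.filter (fun i : Fin n => (i:ℕ) < j)
      = Finset.map (Fin.castLEEmb hj) Finset.univ := by
    ext i
    simp only [Finset.mem_filter, Finset.mem_univ, true_and, Finset.mem_map]
    constructor
    · intro hi
      exact ⟨⟨(i:ℕ), hi⟩, Fin.ext rfl⟩
    · rintro ⟨k, -, rfl⟩
      simpa using k.isLt
  rw [this, Finset.card_map, Finset.card_univ, Fintype.card_fin]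

lemma entH_trunc_eq (p : Ω → ℝ) (X : Ω → Fin n → Bool)
    (hXunif : ∀ x, probOf p X x = (1 / 2 : ℝ) ^ n) {j : ℕ} (hj : j ≤ n) :
    entH p (fun ω => trunc n (X ω) j) = j := by
  have : (fun ω => trunc n (X ω) j)
      = fun ω => mask n (Finset.univ.filter (fun i : Fin n => (i:ℕ) < j)) (X ω) := by
    funext ω; exact trunc_eq_mask (X ω) j
  rw [this, entH_mask p X hXunif, card_filter_val_lt hj]

end Lemmas5
section Lemmas6

lemma telescope (f : ℕ → ℝ) (i : ℕ) :
    ∑ j ∈ Finset.Icc 1 i, (f j - f (j-1)) = f i - f 0 := by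
  induction i with
  | zero => simp
  | succ k ih =>
    rw [Finset.sum_Icc_succ_top (by omega : 1 ≤ k + 1), ih]
    simp only [Nat.add_sub_cancel]
    ring

lemma swap_sum (n : ℕ) (pM q : ℕ → ℝ) (hq : ∀ j, q j = ∑ i ∈ Finset.Icc j n, pM i)
    (c : ℕ → ℝ) :
    ∑ i ∈ Finset.range (n+1), pM i * ∑ j ∈ Finset.Icc 1 i, c j
      = ∑ j ∈ Finset.Icc 1 n, q j * c j := by
  have step1 : ∀ i ∈ Finset.range (n+1),
      pM i * ∑ j ∈ Finset.Icc 1 i, c j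
        = ∑ j ∈ Finset.Icc 1 n, (if j ≤ i then pM i * c j else 0) := by
    intro i hi
    simp only [Finset.mem_range] at hi
    rw [Finset.mul_sum, ← Finset.sum_filter]
    apply Finset.sum_congr _ (fun _ _ => rfl)
    ext j
    simp only [Finset.mem_Icc, Finset.mem_filter]
    omega
  rw [Finset.sum_congr rfl step1, Finset.sum_comm]
  apply Finset.sum_congr rfl
  intro j _
  rw [← Finset.sum_filter]
  have hfil : (Finset.range (n+1)).filter (fun i => j ≤ i) = Finset.Icc j n := by
    ext i
    simp only [Finset.mem_filter, Finset.mem_range, Finset.mem_Icc]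
    omega
  rw [hfil, ← Finset.sum_mul, hq j]

lemma alg_identity (n m₁ : ℕ) (hm : m₁ ≤ n) (μ : ℝ) (pM q : ℕ → ℝ)
    (hq : ∀ j, q j = ∑ i ∈ Finset.Icc j n, pM i) (A B : ℕ → ℝ) (hB0 : B 0 = 0) :
    (A m₁ - A 0) + μ * ∑ i ∈ Finset.range (n+1), pM i * ((A 0 + B i) - A i)
      = (∑ j ∈ Finset.Icc 1 m₁,
          ((1 - μ * q j) * (A j - A (j-1)) + μ * q j * (B j - B (j-1))))
        + μ * ∑ j ∈ Finset.Icc (m₁+1) n,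
            q j * ((A (j-1) + B j) - A j - B (j-1)) := by
  set c : ℕ → ℝ := fun j => (B j - B (j-1)) - (A j - A (j-1)) with hc
  have hAB : ∀ i, (A 0 + B i) - A i = ∑ j ∈ Finset.Icc 1 i, c j := by
    intro i
    rw [hc]
    simp only
    rw [Finset.sum_sub_distrib, telescope B i, telescope A i, hB0]
    ring
  have hswap := swap_sum n pM q hq c
  have hsplit : ∑ j ∈ Finset.Icc 1 n, q j * c j
      = ∑ j ∈ Finset.Icc 1 m₁, q j * c j + ∑ j ∈ Finset.Icc (m₁+1) n, q j * c j := by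
    rw [show (1:ℕ) = 0 + 1 from rfl, Finset.Icc_add_one_left_eq_Ioc, Finset.Icc_add_one_left_eq_Ioc, zero_add, Finset.Icc_add_one_left_eq_Ioc,
      Finset.sum_Ioc_consecutive _ (Nat.zero_le m₁) hm]
  have htel : ∑ j ∈ Finset.Icc 1 m₁, (A j - A (j-1)) = A m₁ - A 0 := telescope A m₁
  calc (A m₁ - A 0) + μ * ∑ i ∈ Finset.range (n+1), pM i * ((A 0 + B i) - A i)
      = (A m₁ - A 0) + μ * ∑ j ∈ Finset.Icc 1 n, q j * c j := by
        rw [Finset.sum_congr rfl (fun i _ => by rw [hAB i]), hswap]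
    _ = (∑ j ∈ Finset.Icc 1 m₁, (A j - A (j-1)))
          + μ * (∑ j ∈ Finset.Icc 1 m₁, q j * c j + ∑ j ∈ Finset.Icc (m₁+1) n, q j * c j) := by
        rw [htel, hsplit]
    _ = ((∑ j ∈ Finset.Icc 1 m₁, (A j - A (j-1))) + ∑ j ∈ Finset.Icc 1 m₁, μ * (q j * c j))
          + μ * ∑ j ∈ Finset.Icc (m₁+1) n, q j * c j := by
        rw [← Finset.mul_sum]
        ring
    _ = (∑ j ∈ Finset.Icc 1 m₁,
          ((1 - μ * q j) * (A j - A (j-1)) + μ * q j * (B j - B (j-1))))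
        + μ * ∑ j ∈ Finset.Icc (m₁+1) n, q j * ((A (j-1) + B j) - A j - B (j-1)) := by
        rw [← Finset.sum_add_distrib]
        congr 1
        · apply Finset.sum_congr rfl
          intro j _
          rw [hc]
          ring
        · rw [Finset.mul_sum, Finset.mul_sum]
          apply Finset.sum_congr rfl
          intro j _
          rw [hc]
          ring

end Lemmas6
section Lemmas7

variable {Ω γ : Type} [Fintype Ω] [DecidableEq γ] {n : ℕ}

lemma condH_bit_V (p : Ω → ℝ) (X : Ω → Fin n → Bool) (V : Ω → γ) {j : ℕ}
    (h1 : 1 ≤ j) (h2 : j ≤ n) :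
    condH p (fun ω => bitOf n (X ω) j) (fun ω => (V ω, trunc n (X ω) (j-1)))
      = entH p (fun ω => (V ω, trunc n (X ω) j))
        - entH p (fun ω => (V ω, trunc n (X ω) (j-1))) := by
  unfold condH
  rw [entH_bit_pair p X V h1 h2]

lemma condH_bit (p : Ω → ℝ) (X : Ω → Fin n → Bool) {j : ℕ}
    (h1 : 1 ≤ j) (h2 : j ≤ n) :
    condH p (fun ω => bitOf n (X ω) j) (fun ω => trunc n (X ω) (j-1))
      = entH p (fun ω => trunc n (X ω) j) - entH p (fun ω => trunc n (X ω) (j-1)) := by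
  unfold condH
  rw [entH_bit_pair' p X h1 h2]

lemma condMI_bit (p : Ω → ℝ) (X : Ω → Fin n → Bool) (V : Ω → γ) {j : ℕ}
    (h1 : 1 ≤ j) (h2 : j ≤ n) :
    condMI p V (fun ω => bitOf n (X ω) j) (fun ω => trunc n (X ω) (j-1))
      = (entH p (fun ω => (V ω, trunc n (X ω) (j-1))) + entH p (fun ω => trunc n (X ω) j))
        - entH p (fun ω => (V ω, trunc n (X ω) j)) - entH p (fun ω => trunc n (X ω) (j-1)) := by
  unfold condMI
  rw [entH_bit_pair' p X h1 h2, entH_triple p X V h1 h2]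

lemma key_identity (m₁ : ℕ) (hm : m₁ ≤ n) (p : Ω → ℝ)
    (X : Ω → Fin n → Bool) (hXunif : ∀ x, probOf p X x = (1 / 2 : ℝ) ^ n)
    (μ : ℝ) (pM : ℕ → ℝ) (q : ℕ → ℝ) (hq : ∀ j, q j = ∑ i ∈ Finset.Icc j n, pM i)
    (V : Ω → γ) :
    bcObjective p n m₁ μ pM X V =
      (∑ j ∈ Finset.Icc 1 m₁,
        ((1 - μ * q j) *
            condH p (fun ω => bitOf n (X ω) j) (fun ω => (V ω, trunc n (X ω) (j - 1)))
          + μ * q j *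
            condH p (fun ω => bitOf n (X ω) j) (fun ω => trunc n (X ω) (j - 1)))) +
      μ * ∑ j ∈ Finset.Icc (m₁ + 1) n,
        q j * condMI p V (fun ω => bitOf n (X ω) j) (fun ω => trunc n (X ω) (j - 1)) := by
  have hB0 : entH p (fun ω => trunc n (X ω) 0) = 0 := by
    have := entH_trunc_eq p X hXunif (Nat.zero_le n)
    simpa using this
  have halg := alg_identity n m₁ hm μ pM q hq
    (fun j => entH p (fun ω => (V ω, trunc n (X ω) j)))
    (fun j => entH p (fun ω => trunc n (X ω) j)) hB0
  try simp only at halg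
  calc bcObjective p n m₁ μ pM X V
      = (entH p (fun ω => (V ω, trunc n (X ω) m₁))
          - entH p (fun ω => (V ω, trunc n (X ω) 0)))
        + μ * ∑ i ∈ Finset.range (n+1), pM i
            * ((entH p (fun ω => (V ω, trunc n (X ω) 0)) + entH p (fun ω => trunc n (X ω) i))
                - entH p (fun ω => (V ω, trunc n (X ω) i))) := by
        unfold bcObjective condH mutI
        rw [entH_pair_comm p (fun ω => trunc n (X ω) m₁) V,
          entH_pair_trunc_zero p X V]
    _ = _ := by
        rw [halg]
        congr 1
        · apply Finset.sum_congr rfl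
          intro j hj
          simp only [Finset.mem_Icc] at hj
          rw [condH_bit_V p X V hj.1 (le_trans hj.2 hm), condH_bit p X hj.1 (le_trans hj.2 hm)]
        · congr 1
          apply Finset.sum_congr rfl
          intro j hj
          simp only [Finset.mem_Icc] at hj
          rw [condMI_bit p X V (by omega) hj.2]

lemma fiber_le_two (p : Ω → ℝ) (X : Ω → Fin n → Bool) (V : Ω → γ) {j : ℕ}
    (h1 : 1 ≤ j) (h2 : j ≤ n) :
    ∀ m : γ × (Fin n → Bool),
      ((Finset.univ.image (fun ω => (V ω, trunc n (X ω) j))).filter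
        (fun a => ((a.1, trunc n a.2 (j-1)) : γ × (Fin n → Bool)) = m)).card ≤ 2 := by
  intro m
  have h2' : (2:ℕ) = (Finset.univ : Finset Bool).card := by simp
  rw [h2']
  apply Finset.card_le_card_of_injOn (fun a => a.2 ⟨j-1, by omega⟩)
    (fun _ _ => Finset.mem_univ _)
  intro a ha b hb hab
  simp only [Finset.coe_filter, Set.mem_setOf_eq, Finset.mem_image, Finset.mem_univ,
    true_and] at ha hb
  obtain ⟨⟨ω₁, ha1⟩, ha2⟩ := ha
  obtain ⟨⟨ω₂, hb1⟩, hb2⟩ := hb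
  have e1 : a.2 = trunc n (X ω₁) j := by rw [← ha1]
  have e2 : b.2 = trunc n (X ω₂) j := by rw [← hb1]
  have r1 := trunc_reconstruct (X ω₁) h1 h2
  rw [← e1] at r1
  have r2 := trunc_reconstruct (X ω₂) h1 h2
  rw [← e2] at r2
  have hfst : a.1 = b.1 := by
    have h := ha2.trans hb2.symm
    exact (Prod.ext_iff.mp h).1
  have hsnd2 : trunc n a.2 (j-1) = trunc n b.2 (j-1) := by
    have h := ha2.trans hb2.symm
    exact (Prod.ext_iff.mp h).2
  have hbit : a.2 ⟨j-1, by omega⟩ = b.2 ⟨j-1, by omega⟩ := hab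
  have hsnd : a.2 = b.2 := by
    rw [r1, r2]
    funext i
    by_cases hi : (i:ℕ) = j - 1
    · simp only [if_pos hi]
      exact hbit
    · simp only [if_neg hi]
      rw [hsnd2]
  exact Prod.ext hfst hsnd

lemma A_mono (p : Ω → ℝ) (hp : ∀ ω, 0 ≤ p ω) (X : Ω → Fin n → Bool) (V : Ω → γ) {j : ℕ}
    (h1 : 1 ≤ j) :
    entH p (fun ω => (V ω, trunc n (X ω) (j-1)))
      ≤ entH p (fun ω => (V ω, trunc n (X ω) j)) := by
  have hle := entH_comp_le p hp (fun ω => (V ω, trunc n (X ω) j))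
    (fun a : γ × (Fin n → Bool) => (a.1, trunc n a.2 (j-1)))
  have heq : entH p (fun ω => (V ω, trunc n (X ω) (j-1)))
      = entH p (fun ω => ((fun a : γ × (Fin n → Bool) => (a.1, trunc n a.2 (j-1)))
          ((V ω, trunc n (X ω) j)))) := by
    apply congrArg (entH p)
    funext ω
    exact congrArg (fun t => (V ω, t)) (trunc_trunc (X ω) (show j - 1 ≤ j by omega)).symm
  rw [heq]
  exact hle

lemma A_step (p : Ω → ℝ) (hp : ∀ ω, 0 ≤ p ω) (hp1 : ∑ ω, p ω = 1)
    (X : Ω → Fin n → Bool) (V : Ω → γ) {j : ℕ} (h1 : 1 ≤ j) (h2 : j ≤ n) :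
    entH p (fun ω => (V ω, trunc n (X ω) j))
      ≤ entH p (fun ω => (V ω, trunc n (X ω) (j-1))) + 1 := by
  have hle := entH_le_comp_add p hp hp1 (fun ω => (V ω, trunc n (X ω) j))
    (fun a : γ × (Fin n → Bool) => (a.1, trunc n a.2 (j-1))) 2 (by norm_num)
    (fiber_le_two p X V h1 h2)
  have heq : entH p (fun ω => ((fun a : γ × (Fin n → Bool) => (a.1, trunc n a.2 (j-1)))
        ((V ω, trunc n (X ω) j))))
      = entH p (fun ω => (V ω, trunc n (X ω) (j-1))) := by
    apply congrArg (entH p)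
    funext ω
    exact congrArg (fun t => (V ω, t)) (trunc_trunc (X ω) (show j - 1 ≤ j by omega))
  rw [heq] at hle
  have hlog : Real.logb 2 ((2:ℕ):ℝ) = 1 := by
    push_cast
    exact Real.logb_self_eq_one (by norm_num)
  rw [hlog] at hle
  exact hle

lemma max_term {h c : ℝ} (h0 : 0 ≤ h) (h1 : h ≤ 1) (hc : 0 ≤ c) :
    (1 - c) * h + c * 1 ≤ max 1 c := by
  rcases le_total c 1 with h' | h'
  · apply le_max_of_le_left
    nlinarith
  · apply le_max_of_le_right
    nlinarith

end Lemmas7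
section Lemmas8

variable {Ω γ : Type} [Fintype Ω] [DecidableEq γ] {n : ℕ}

lemma key_bound (m₁ : ℕ) (hm : m₁ ≤ n) (p : Ω → ℝ)
    (hp : ∀ ω, 0 ≤ p ω) (hp1 : ∑ ω, p ω = 1)
    (X : Ω → Fin n → Bool) (hXunif : ∀ x, probOf p X x = (1 / 2 : ℝ) ^ n)
    (μ : ℝ) (hμ : 0 ≤ μ)
    (pM : ℕ → ℝ) (hpM : ∀ i, 0 ≤ pM i)
    (q : ℕ → ℝ) (hq : ∀ j, q j = ∑ i ∈ Finset.Icc j n, pM i)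
    (V : Ω → γ) :
    bcObjective p n m₁ μ pM X V ≤
      (∑ j ∈ Finset.Icc 1 m₁, max 1 (μ * q j)) +
        μ * ∑ j ∈ Finset.Icc (m₁ + 1) n, ∑ i ∈ Finset.Icc j n, pM i := by
  have hq0 : ∀ j, 0 ≤ q j := by
    intro j
    rw [hq j]
    exact Finset.sum_nonneg (fun i _ => hpM i)
  have hBdiff : ∀ j : ℕ, 1 ≤ j → j ≤ n →
      entH p (fun ω => trunc n (X ω) j) - entH p (fun ω => trunc n (X ω) (j-1)) = 1 := by
    intro j h1 h2
    rw [entH_trunc_eq p X hXunif h2, entH_trunc_eq p X hXunif (show j - 1 ≤ n by omega)]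
    have : ((j - 1 : ℕ) : ℝ) = (j : ℝ) - 1 := by
      have := Nat.cast_sub (R := ℝ) h1
      simpa using this
    rw [this]
    ring
  rw [key_identity m₁ hm p X hXunif μ pM q hq V]
  apply add_le_add
  · apply Finset.sum_le_sum
    intro j hj
    simp only [Finset.mem_Icc] at hj
    have h1 : 1 ≤ j := hj.1
    have h2 : j ≤ n := le_trans hj.2 hm
    rw [condH_bit_V p X V h1 h2, condH_bit p X h1 h2, hBdiff j h1 h2]
    have hA0 : 0 ≤ entH p (fun ω => (V ω, trunc n (X ω) j))
        - entH p (fun ω => (V ω, trunc n (X ω) (j-1))) :=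
      sub_nonneg.mpr (A_mono p hp X V h1)
    have hA1 : entH p (fun ω => (V ω, trunc n (X ω) j))
        - entH p (fun ω => (V ω, trunc n (X ω) (j-1))) ≤ 1 := by
      have := A_step p hp hp1 X V h1 h2
      linarith
    have := max_term hA0 hA1 (mul_nonneg hμ (hq0 j))
    linarith
  · apply mul_le_mul_of_nonneg_left _ hμ
    apply Finset.sum_le_sum
    intro j hj
    simp only [Finset.mem_Icc] at hj
    have h1 : 1 ≤ j := by omega
    have h2 : j ≤ n := hj.2
    rw [condMI_bit p X V h1 h2, ← hq j]
    have hA0 : entH p (fun ω => (V ω, trunc n (X ω) (j-1)))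
        ≤ entH p (fun ω => (V ω, trunc n (X ω) j)) := A_mono p hp X V h1
    have hB := hBdiff j h1 h2
    nlinarith [hq0 j]

end Lemmas8
section Lemmas9

variable {Ω : Type} [Fintype Ω] {n : ℕ}

lemma mask_mask_subset {S U : Finset (Fin n)} (hSU : S ⊆ U) (x : Fin n → Bool) :
    mask n S (mask n U x) = mask n S x := by
  funext i
  by_cases hi : i ∈ S
  · simp [mask, hi, hSU hi]
  · simp [mask, hi]

lemma mask_or (S T : Finset (Fin n)) (x : Fin n → Bool) :
    (fun i => mask n S x i || mask n T x i) = mask n (S ∪ T) x := by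
  funext i
  by_cases hiS : i ∈ S <;> by_cases hiT : i ∈ T <;>
    simp [mask, hiS, hiT, Finset.mem_union]

lemma entH_maskpair (p : Ω → ℝ) (X : Ω → Fin n → Bool)
    (hXunif : ∀ x, probOf p X x = (1 / 2 : ℝ) ^ n) (S T : Finset (Fin n)) :
    entH p (fun ω => (mask n S (X ω), mask n T (X ω))) = (((S ∪ T).card : ℕ) : ℝ) := by
  have hcongr : entH p (fun ω => (mask n S (X ω), mask n T (X ω)))
      = entH p (fun ω => mask n (S ∪ T) (X ω)) := by
    apply entH_congr p _ _
      (fun m : Fin n → Bool => (mask n S m, mask n T m))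
      (fun a : (Fin n → Bool) × (Fin n → Bool) => fun i => a.1 i || a.2 i)
    · intro ω
      try simp only
      rw [mask_mask_subset (Finset.subset_union_left) (X ω),
        mask_mask_subset (Finset.subset_union_right) (X ω)]
    · intro ω
      try simp only
      exact mask_or S T (X ω)
  rw [hcongr, entH_mask p X hXunif]

lemma attain_eval (m₁ : ℕ) (hm : m₁ ≤ n) (p : Ω → ℝ)
    (X : Ω → Fin n → Bool) (hXunif : ∀ x, probOf p X x = (1 / 2 : ℝ) ^ n)
    (μ : ℝ) (pM : ℕ → ℝ)
    (q : ℕ → ℝ) (hq : ∀ j, q j = ∑ i ∈ Finset.Icc j n, pM i)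
    (Q : ℕ → Prop) [DecidablePred Q]
    (hQtop : ∀ k, m₁ ≤ k → Q k)
    (hQle : ∀ j, 1 ≤ j → j ≤ m₁ → (Q (j-1) ↔ 1 ≤ μ * q j)) :
    bcObjective p n m₁ μ pM X
        (fun ω => mask n (Finset.univ.filter (fun i : Fin n => Q i.val)) (X ω))
      = (∑ j ∈ Finset.Icc 1 m₁, max 1 (μ * q j)) +
          μ * ∑ j ∈ Finset.Icc (m₁ + 1) n, ∑ i ∈ Finset.Icc j n, pM i := by
  set SC : Finset (Fin n) := Finset.univ.filter (fun i : Fin n => Q i.val) with hSC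
  set Lt : ℕ → Finset (Fin n) := fun j => Finset.univ.filter (fun i : Fin n => (i:ℕ) < j)
    with hLt
  have hA : ∀ j : ℕ,
      entH p (fun ω => (mask n SC (X ω), trunc n (X ω) j)) = (((SC ∪ Lt j).card : ℕ) : ℝ) := by
    intro j
    have heq : (fun ω => (mask n SC (X ω), trunc n (X ω) j))
        = fun ω => (mask n SC (X ω), mask n (Lt j) (X ω)) := by
      funext ω
      rw [hLt]
      simp only
      rw [trunc_eq_mask]
    rw [heq, entH_maskpair p X hXunif]
  have hcard : ∀ j : ℕ, 1 ≤ j → j ≤ n →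
      (SC ∪ Lt j).card = (SC ∪ Lt (j-1)).card + (if Q (j-1) then 0 else 1) := by
    intro j h1 h2
    have hlt : j - 1 < n := by omega
    have hUnion : SC ∪ Lt j = insert ⟨j-1, hlt⟩ (SC ∪ Lt (j-1)) := by
      ext i
      simp only [Finset.mem_union, Finset.mem_insert, hSC, hLt, Finset.mem_filter,
        Finset.mem_univ, true_and, Fin.ext_iff]
      constructor
      · rintro (hQ | hlt')
        · exact Or.inr (Or.inl hQ)
        · by_cases hij : (i:ℕ) = j - 1
          · exact Or.inl hij
          · exact Or.inr (Or.inr (by omega))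
      · rintro (hij | hQ | hlt')
        · exact Or.inr (by omega)
        · exact Or.inl hQ
        · exact Or.inr (by omega)
    rw [hUnion]
    by_cases hQ : Q (j-1)
    · have hmem : (⟨j-1, hlt⟩ : Fin n) ∈ SC ∪ Lt (j-1) := by
        simp only [Finset.mem_union, hSC, Finset.mem_filter, Finset.mem_univ, true_and]
        exact Or.inl hQ
      rw [if_pos hQ, Finset.card_insert_of_mem hmem]
      omega
    · have hmem : (⟨j-1, hlt⟩ : Fin n) ∉ SC ∪ Lt (j-1) := by
        simp only [Finset.mem_union, hSC, hLt, Finset.mem_filter, Finset.mem_univ, true_and]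
        push_neg
        exact ⟨hQ, by omega⟩
      rw [if_neg hQ, Finset.card_insert_of_notMem hmem]
  have hB : ∀ j : ℕ, j ≤ n → entH p (fun ω => trunc n (X ω) j) = (j:ℝ) :=
    fun j hj => entH_trunc_eq p X hXunif hj
  rw [key_identity m₁ hm p X hXunif μ pM q hq _]
  congr 1
  · apply Finset.sum_congr rfl
    intro j hj
    simp only [Finset.mem_Icc] at hj
    have h1 : 1 ≤ j := hj.1
    have h2 : j ≤ n := le_trans hj.2 hm
    rw [condH_bit_V p X _ h1 h2, condH_bit p X h1 h2, hA j, hA (j-1),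
      hB j h2, hB (j-1) (by omega), hcard j h1 h2]
    have hj1cast : (((j-1:ℕ)) : ℝ) = (j:ℝ) - 1 := by
      have := Nat.cast_sub (R := ℝ) h1
      simpa using this
    by_cases hQ : Q (j-1)
    · rw [if_pos hQ]
      have hmax : max 1 (μ * q j) = μ * q j := max_eq_right ((hQle j h1 hj.2).mp hQ)
      rw [hmax]
      push_cast
      rw [hj1cast]
      ring
    · rw [if_neg hQ]
      have hle1 : μ * q j ≤ 1 := by
        by_contra hcon
        exact hQ ((hQle j h1 hj.2).mpr (by linarith))
      have hmax : max 1 (μ * q j) = 1 := max_eq_left hle1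
      rw [hmax]
      push_cast
      rw [hj1cast]
      ring
  · congr 1
    apply Finset.sum_congr rfl
    intro j hj
    simp only [Finset.mem_Icc] at hj
    have h1 : 1 ≤ j := by omega
    have h2 : j ≤ n := hj.2
    rw [condMI_bit p X _ h1 h2, hA j, hA (j-1), hB j h2, hB (j-1) (by omega),
      hcard j h1 h2, if_pos (hQtop (j-1) (by omega)), ← hq j]
    have hj1cast : (((j-1:ℕ)) : ℝ) = (j:ℝ) - 1 := by
      have := Nat.cast_sub (R := ℝ) h1
      simpa using this
    push_cast
    rw [hj1cast]
    ring

end Lemmas9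
theorem stmt11 (Ω γ : Type) [Fintype Ω] [DecidableEq γ] (n m₁ : ℕ) (hm : m₁ ≤ n)
    (p : Ω → ℝ) (hp : ∀ ω, 0 ≤ p ω) (hp1 : ∑ ω, p ω = 1)
    (X : Ω → Fin n → Bool) (hXunif : ∀ x, probOf p X x = (1 / 2 : ℝ) ^ n)
    (μ : ℝ) (hμ : 0 ≤ μ)
    (pM : ℕ → ℝ) (hpM : ∀ i, 0 ≤ pM i) (hpM1 : ∑ i ∈ Finset.range (n + 1), pM i = 1)
    (q : ℕ → ℝ) (hq : ∀ j, q j = ∑ i ∈ Finset.Icc j n, pM i)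
    (V : Ω → γ) :
    -- the objective can be rewritten bit-level by bit-level:
    (bcObjective p n m₁ μ pM X V =
      (∑ j ∈ Finset.Icc 1 m₁,
        ((1 - μ * q j) *
            condH p (fun ω => bitOf n (X ω) j) (fun ω => (V ω, trunc n (X ω) (j - 1)))
          + μ * q j *
            condH p (fun ω => bitOf n (X ω) j) (fun ω => trunc n (X ω) (j - 1)))) +
      μ * ∑ j ∈ Finset.Icc (m₁ + 1) n,
        q j * condMI p V (fun ω => bitOf n (X ω) j) (fun ω => trunc n (X ω) (j - 1))) ∧
    -- it is upper bounded by the claimed maximum value: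
    (bcObjective p n m₁ μ pM X V ≤
      (∑ j ∈ Finset.Icc 1 m₁, max 1 (μ * q j)) +
        μ * ∑ j ∈ Finset.Icc (m₁ + 1) n, ∑ i ∈ Finset.Icc j n, pM i) ∧
    -- and the maximum is attained by a V determining exactly the levels j ≤ m₁ with
    -- μ·q(j) ≥ 1 together with the levels j > m₁:
    (∃ V' : Ω → Fin n → Bool,
      (∀ ω, V' ω = fun i : Fin n =>
        if (1 ≤ μ * q (i.val + 1) ∧ i.val + 1 ≤ m₁) ∨ m₁ < i.val + 1 then X ω i else false) ∧
      bcObjective p n m₁ μ pM X V' =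
        (∑ j ∈ Finset.Icc 1 m₁, max 1 (μ * q j)) +
          μ * ∑ j ∈ Finset.Icc (m₁ + 1) n, ∑ i ∈ Finset.Icc j n, pM i) := by
  refine ⟨key_identity m₁ hm p X hXunif μ pM q hq V,
    key_bound m₁ hm p hp hp1 X hXunif μ hμ pM hpM q hq V, ?_⟩
  classical
  refine ⟨fun ω => fun i : Fin n =>
    if (1 ≤ μ * q (i.val + 1) ∧ i.val + 1 ≤ m₁) ∨ m₁ < i.val + 1 then X ω i else false,
    fun ω => rfl, ?_⟩
  have hmask : (fun ω => fun i : Fin n =>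
        if (1 ≤ μ * q (i.val + 1) ∧ i.val + 1 ≤ m₁) ∨ m₁ < i.val + 1 then X ω i else false)
      = fun ω => mask n (Finset.univ.filter (fun i : Fin n =>
          (1 ≤ μ * q (i.val + 1) ∧ i.val + 1 ≤ m₁) ∨ m₁ < i.val + 1)) (X ω) := by
    funext ω i
    by_cases h : (1 ≤ μ * q (i.val + 1) ∧ i.val + 1 ≤ m₁) ∨ m₁ < i.val + 1
    · rw [if_pos h]
      simp only [Nat.add_one_le_iff, Nat.lt_add_one_iff] at h
      simp [mask, h]
    · rw [if_neg h]
      simp only [Nat.add_one_le_iff, Nat.lt_add_one_iff] at h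
      simp [mask, h]
  rw [hmask]
  have hQtop : ∀ k, m₁ ≤ k →
      ((1 ≤ μ * q (k + 1) ∧ k + 1 ≤ m₁) ∨ m₁ < k + 1) := by
    intro k hk
    exact Or.inr (by omega)
  have hQle : ∀ j, 1 ≤ j → j ≤ m₁ →
      (((1 ≤ μ * q ((j-1) + 1) ∧ (j-1) + 1 ≤ m₁) ∨ m₁ < (j-1) + 1) ↔ 1 ≤ μ * q j) := by
    intro j h1 h2
    have hj : j - 1 + 1 = j := by omega
    rw [hj]
    constructor
    · rintro (⟨h, -⟩ | h)
      · exact h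
      · omega
    · intro h
      exact Or.inl ⟨h, h2⟩
  exact attain_eval m₁ hm p X hXunif μ pM q hq
    (fun k => (1 ≤ μ * q (k + 1) ∧ k + 1 ≤ m₁) ∨ m₁ < k + 1) hQtop hQle
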